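/- Every minimal distal ℤ^d-system (X,T₁,…,T_d) has the gluing property: for every j ∈ [d] and all x, y ∈ Q_{T₁,…,T_d}(X) such that the j-upper face of x equals the j-lower face of y, the point z defined by z_ε = x_ε when ε_j = 0 and z_ε = y_ε when ε_j = 1 belongs to Q_{T₁,…,T_d}(X). -/

import Mathlib

open Function Set

/-- The group of self-homeomorphisms of a topological space, under composition. -/
instance homeomorphGroup {X : Type*} [TopologicalSpace X] : Group (X ≃ₜ X) where
  mul f g := g.trans f
  one := Homeomorph.refl X
  inv := Homeomorph.symm
  mul_assoc _ _ _ := rfl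
  one_mul _ := Homeomorph.ext fun _ => rfl
  mul_one _ := Homeomorph.ext fun _ => rfl
  inv_mul_cancel f := Homeomorph.self_trans_symm f

variable {d : ℕ}

/-- The homeomorphism `T₁^{n₁ε₁} ⋯ T_d^{n_dε_d}` associated with `n ∈ ℤ^d` and a vertex
`ε ∈ {0,1}^d` of the cube. -/
def cubeMap {X : Type*} [TopologicalSpace X] (T : Fin d → X ≃ₜ X)
    (n : Fin d → ℤ) (ε : Fin d → Bool) : X ≃ₜ X :=
  ((List.finRange d).map (fun i => T i ^ (if ε i then n i else 0))).prod

/-- The space of directional dynamical cubes `Q_{T₁,…,T_d}(X)`. -/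
def cubes {X : Type*} [TopologicalSpace X] (T : Fin d → X ≃ₜ X) :
    Set ((Fin d → Bool) → X) :=
  closure {y | ∃ (x : X) (n : Fin d → ℤ), ∀ ε, y ε = cubeMap T n ε x}

/-- The group of homeomorphisms generated by `T₁,…,T_d`. -/
def genGroup {X : Type*} [TopologicalSpace X] (T : Fin d → X ≃ₜ X) : Subgroup (X ≃ₜ X) :=
  Subgroup.closure (Set.range T)

/-- Minimality: every orbit is dense. -/
def IsMinimalSystem {X : Type*} [TopologicalSpace X] (T : Fin d → X ≃ₜ X) : Prop :=
  ∀ x : X, Dense {y : X | ∃ g ∈ genGroup T, g x = y}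

/-- Distality: `inf_{g ∈ G} dist (g x) (g y) > 0` whenever `x ≠ y`. -/
def IsDistalSystem {X : Type*} [MetricSpace X] (T : Fin d → X ≃ₜ X) : Prop :=
  ∀ x y : X, x ≠ y → ∃ δ > 0, ∀ g ∈ genGroup T, δ ≤ dist (g x) (g y)

/-- The gluing property: if the `j`-upper face of a cube `x` equals the `j`-lower face of a
cube `y`, the point obtained by gluing the `j`-lower face of `x` with the `j`-upper face of
`y` is again a cube. -/
def GluingProp {X : Type*} [TopologicalSpace X] (T : Fin d → X ≃ₜ X) : Prop :=
  ∀ j : Fin d, ∀ x ∈ cubes T, ∀ y ∈ cubes T,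
    (∀ ε : Fin d → Bool, x (Function.update ε j true) = y (Function.update ε j false)) →
    (fun ε : Fin d → Bool => if ε j then y ε else x ε) ∈ cubes T

/-! ### Auxiliary material for the proof -/

namespace GluingAux

@[simp] lemma homeo_mul_apply {X : Type*} [TopologicalSpace X] (f g : X ≃ₜ X) (x : X) :
    (f * g) x = f (g x) := rfl

@[simp] lemma homeo_one_apply {X : Type*} [TopologicalSpace X] (x : X) :
    (1 : X ≃ₜ X) x = x := rfl

/-- Products of two lists of commuting elements. -/
lemma list_prod_map_mul {M : Type*} [Monoid M] {ι : Type*} (f g : ι → M) :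
    ∀ (l : List ι), (∀ i ∈ l, ∀ j ∈ l, Commute (f i) (g j)) →
      (l.map f).prod * (l.map g).prod = (l.map fun i => f i * g i).prod := by
  intro l
  induction l with
  | nil => simp
  | cons a t ih =>
    intro h
    simp only [List.map_cons, List.prod_cons]
    have hc : Commute ((t.map f).prod) (g a) := by
      refine Commute.list_prod_left _ _ ?_
      intro x hx
      obtain ⟨i, hi, rfl⟩ := List.mem_map.1 hx
      exact h i (List.mem_cons_of_mem _ hi) a List.mem_cons_self
    have ht : (t.map f).prod * (t.map g).prod = (t.map fun i => f i * g i).prod :=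
      ih fun i hi j hj =>
        h i (List.mem_cons_of_mem _ hi) j (List.mem_cons_of_mem _ hj)
    calc f a * (t.map f).prod * (g a * (t.map g).prod)
        = f a * ((t.map f).prod * g a) * (t.map g).prod := by
          rw [mul_assoc (f a), mul_assoc (f a), mul_assoc ((t.map f).prod)]
      _ = f a * (g a * (t.map f).prod) * (t.map g).prod := by rw [hc.eq]
      _ = (f a * g a) * ((t.map f).prod * (t.map g).prod) := by
          rw [← mul_assoc (f a), mul_assoc (f a * g a)]
      _ = (f a * g a) * (t.map fun i => f i * g i).prod := by rw [ht]

lemma list_prod_map_eq_single {M : Type*} [Monoid M] {ι : Type*} (f : ι → M) (i : ι) :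
    ∀ (l : List ι), l.Nodup → i ∈ l → (∀ j ∈ l, j ≠ i → f j = 1) →
      (l.map f).prod = f i := by
  intro l
  induction l with
  | nil => intro _ h; exact absurd h List.not_mem_nil
  | cons a t ih =>
    intro hnd hmem h1
    have hnd' := List.nodup_cons.1 hnd
    rcases List.mem_cons.1 hmem with rfl | hit
    · simp only [List.map_cons, List.prod_cons]
      have : (t.map f).prod = 1 := by
        refine List.prod_eq_one ?_
        intro x hx
        obtain ⟨j, hj, rfl⟩ := List.mem_map.1 hx
        exact h1 j (List.mem_cons_of_mem _ hj) (fun h => hnd'.1 (h ▸ hj))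
      rw [this, mul_one]
    · have ha : f a = 1 :=
        h1 a List.mem_cons_self (by rintro rfl; exact hnd'.1 hit)
      simp only [List.map_cons, List.prod_cons, ha, one_mul]
      exact ih hnd'.2 hit (fun j hj => h1 j (List.mem_cons_of_mem _ hj))

section Phi

variable {X : Type*} [TopologicalSpace X] {d : ℕ}

/-- The homomorphism `m ↦ T₁^{m₁} ⋯ T_d^{m_d}`. -/
def phiH (T : Fin d → X ≃ₜ X) (m : Fin d → ℤ) : X ≃ₜ X :=
  ((List.finRange d).map (fun i => T i ^ m i)).prod

lemma cubeMap_eq_phiH (T : Fin d → X ≃ₜ X) (n : Fin d → ℤ) (ε : Fin d → Bool) :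
    cubeMap T n ε = phiH T (fun i => if ε i then n i else 0) := rfl

variable {T : Fin d → X ≃ₜ X}

lemma commuteT (hcomm : ∀ i j : Fin d, ∀ x : X, T i (T j x) = T j (T i x)) (i j : Fin d) :
    Commute (T i) (T j) :=
  Homeomorph.ext fun x => hcomm i j x

lemma phiH_mul (hcomm : ∀ i j : Fin d, ∀ x : X, T i (T j x) = T j (T i x))
    (m n : Fin d → ℤ) : phiH T m * phiH T n = phiH T (m + n) := by
  unfold phiH
  rw [list_prod_map_mul (fun i => T i ^ m i) (fun i => T i ^ n i) _
    (fun i _ j _ => (commuteT hcomm i j).zpow_zpow (m i) (n j))]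
  congr 1
  refine List.map_congr_left ?_
  intro i _
  rw [Pi.add_apply, zpow_add]

lemma phiH_zero : phiH T 0 = 1 := by
  unfold phiH
  refine List.prod_eq_one ?_
  intro x hx
  obtain ⟨i, _, rfl⟩ := List.mem_map.1 hx
  simp

lemma phiH_mul_apply (hcomm : ∀ i j : Fin d, ∀ x : X, T i (T j x) = T j (T i x))
    (m n : Fin d → ℤ) (x : X) : phiH T m (phiH T n x) = phiH T (m + n) x := by
  rw [← phiH_mul hcomm m n]; rfl

lemma phiH_mem_genGroup (m : Fin d → ℤ) : phiH T m ∈ genGroup T := by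
  refine Subgroup.list_prod_mem _ ?_
  intro x hx
  obtain ⟨i, _, rfl⟩ := List.mem_map.1 hx
  exact zpow_mem (Subgroup.subset_closure (Set.mem_range_self i)) _

lemma phiH_single (i : Fin d) : phiH T (Pi.single i 1) = T i := by
  unfold phiH
  have h := list_prod_map_eq_single (fun l => T l ^ (Pi.single i 1 : Fin d → ℤ) l) i
    (List.finRange d) (List.nodup_finRange d) (List.mem_finRange i)
    (fun j _ hji => by simp [Pi.single_eq_of_ne hji])
  rw [h]
  simp

lemma exists_phiH_rep (hcomm : ∀ i j : Fin d, ∀ x : X, T i (T j x) = T j (T i x))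
    {g : X ≃ₜ X} (hg : g ∈ genGroup T) : ∃ m : Fin d → ℤ, g = phiH T m := by
  induction hg using Subgroup.closure_induction with
  | mem x hx =>
    obtain ⟨i, rfl⟩ := hx
    exact ⟨Pi.single i 1, (phiH_single i).symm⟩
  | one => exact ⟨0, phiH_zero.symm⟩
  | mul x y hx hy ihx ihy =>
    obtain ⟨m, rfl⟩ := ihx
    obtain ⟨n, rfl⟩ := ihy
    exact ⟨m + n, phiH_mul hcomm m n⟩
  | inv x hx ihx =>
    obtain ⟨m, rfl⟩ := ihx
    have h1 : phiH T (-m) * phiH T m = 1 := by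
      rw [phiH_mul hcomm, neg_add_cancel, phiH_zero]
    exact ⟨-m, (eq_inv_of_mul_eq_one_left h1).symm⟩

end Phi

section Ellis

variable {X : Type*} [MetricSpace X] [CompactSpace X] {d : ℕ}

instance : TopologicalSpace (Function.End X) :=
  inferInstanceAs (TopologicalSpace (X → X))

instance : CompactSpace (Function.End X) :=
  inferInstanceAs (CompactSpace (X → X))

instance : T2Space (Function.End X) :=
  inferInstanceAs (T2Space (X → X))

lemma continuous_end_apply (x : X) : Continuous fun f : Function.End X => f x :=
  continuous_apply (A := fun _ : X => X) x

variable (T : Fin d → X ≃ₜ X)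

/-- A generator of the enveloping semigroup of the cube system: the tuple of maps
`ε ↦ Φ(m + k⊙ε)`. -/
def gen (m k : Fin d → ℤ) : (Fin d → Bool) → Function.End X :=
  fun ε => (⇑(phiH T (fun i => m i + if ε i then k i else 0)) : Function.End X)

/-- Generators. -/
def gens : Set ((Fin d → Bool) → Function.End X) :=
  {P | ∃ m k : Fin d → ℤ, P = gen T m k}

/-- The enveloping (Ellis) semigroup of the cube system. -/
def ellis : Set ((Fin d → Bool) → Function.End X) :=
  closure (gens T)

/-- The enveloping semigroup of the base system. -/
def ellisX : Set (Function.End X) :=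
  closure {f : Function.End X | ∃ m : Fin d → ℤ, f = ⇑(phiH T m)}

variable {T}

lemma gen_mul (hcomm : ∀ i j : Fin d, ∀ x : X, T i (T j x) = T j (T i x))
    (m k m' k' : Fin d → ℤ) :
    gen T m k * gen T m' k' = gen T (m + m') (k + k') := by
  funext ε x
  show phiH T (fun i => m i + if ε i then k i else 0)
      (phiH T (fun i => m' i + if ε i then k' i else 0) x)
    = phiH T (fun i => (m + m') i + if ε i then (k + k') i else 0) x
  rw [phiH_mul_apply hcomm]
  have harg : ((fun i => m i + if ε i then k i else 0) + fun i => m' i + if ε i then k' i else 0)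
      = fun i => (m + m') i + if ε i then (k + k') i else 0 := by
    funext i
    by_cases h : ε i <;> simp [h] <;> ring
  rw [harg]

lemma gen_zero : gen T 0 0 = 1 := by
  funext ε x
  show phiH T (fun i => (0 : Fin d → ℤ) i + if ε i then (0 : Fin d → ℤ) i else 0) x = x
  have h0 : (fun i => (0 : Fin d → ℤ) i + if ε i then (0 : Fin d → ℤ) i else 0)
      = (0 : Fin d → ℤ) := by
    funext i; by_cases h : ε i <;> simp [h]
  rw [h0, phiH_zero]
  rfl

lemma one_mem_ellis : (1 : (Fin d → Bool) → Function.End X) ∈ ellis T :=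
  subset_closure ⟨0, 0, gen_zero.symm⟩

lemma isCompact_ellis : IsCompact (ellis T) :=
  isClosed_closure.isCompact

lemma continuous_mulRight (Q : (Fin d → Bool) → Function.End X) :
    Continuous fun P : (Fin d → Bool) → Function.End X => P * Q := by
  refine continuous_pi fun ε => ?_
  show Continuous fun P : (Fin d → Bool) → Function.End X => (fun x : X => P ε (Q ε x) : Function.End X)
  exact continuous_pi fun x => (continuous_end_apply (Q ε x)).comp (continuous_apply ε)

lemma continuous_mulLeft_gen (m k : Fin d → ℤ) :
    Continuous fun Q : (Fin d → Bool) → Function.End X => gen T m k * Q := by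
  refine continuous_pi fun ε => ?_
  show Continuous fun Q : (Fin d → Bool) → Function.End X =>
    (fun x : X => gen T m k ε (Q ε x) : Function.End X)
  refine continuous_pi fun x => ?_
  exact (phiH T _).continuous.comp ((continuous_end_apply x).comp (continuous_apply ε))

lemma ellis_mul_mem (hcomm : ∀ i j : Fin d, ∀ x : X, T i (T j x) = T j (T i x))
    {P Q : (Fin d → Bool) → Function.End X}
    (hP : P ∈ ellis T) (hQ : Q ∈ ellis T) : P * Q ∈ ellis T := by
  have step1 : ∀ m k : Fin d → ℤ, ∀ R ∈ ellis T, gen T m k * R ∈ ellis T := by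
    intro m k R hR
    have hmt : MapsTo (fun R => gen T m k * R) (gens T) (gens T) := by
      rintro R' ⟨m', k', rfl⟩
      exact ⟨m + m', k + k', gen_mul hcomm m k m' k'⟩
    exact (hmt.closure (continuous_mulLeft_gen m k)) hR
  have hmt2 : MapsTo (fun P => P * Q) (gens T) (ellis T) := by
    rintro P' ⟨m, k, rfl⟩
    exact step1 m k Q hQ
  exact (hmt2.closure_left (continuous_mulRight Q) isClosed_closure) hP

lemma ellis_proj {P : (Fin d → Bool) → Function.End X} (hP : P ∈ ellis T) (ε : Fin d → Bool) :
    P ε ∈ ellisX T := by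
  have hmt : MapsTo (fun P : (Fin d → Bool) → Function.End X => P ε) (gens T)
      {f : Function.End X | ∃ m : Fin d → ℤ, f = ⇑(phiH T m)} := by
    rintro P' ⟨m, k, rfl⟩
    exact ⟨fun i => m i + if ε i then k i else 0, rfl⟩
  exact (hmt.closure (continuous_apply ε)) hP

/-- Distality: idempotents of the base enveloping semigroup fix every point. -/
lemma idem_fix (hdist : IsDistalSystem T) {q : Function.End X} (hq : q ∈ ellisX T)
    (hid : ∀ x, q (q x) = q x) (x : X) : q x = x := by
  by_contra hne
  obtain ⟨δ, hδ, hδ'⟩ := hdist x (q x) (fun h => hne h.symm)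
  set U : Set (Function.End X) :=
    {f | dist (f x) (q x) < δ / 2 ∧ dist (f (q x)) (q x) < δ / 2} with hU
  have hUopen : IsOpen U := by
    have h1 : IsOpen {f : Function.End X | dist (f x) (q x) < δ / 2} :=
      isOpen_lt (by fun_prop) continuous_const
    have h2 : IsOpen {f : Function.End X | dist (f (q x)) (q x) < δ / 2} :=
      isOpen_lt (by fun_prop) continuous_const
    exact h1.inter h2
  have hqU : q ∈ U := by
    constructor
    · simpa using half_pos hδ
    · rw [hid x]; simpa using half_pos hδ
  obtain ⟨f, hfU, hfs⟩ := (mem_closure_iff.1 hq) U hUopen hqU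
  obtain ⟨m, rfl⟩ := hfs
  have hge : δ ≤ dist (phiH T m x) (phiH T m (q x)) := hδ' _ (phiH_mem_genGroup m)
  have htri : dist (phiH T m x) (phiH T m (q x)) ≤
      dist (phiH T m x) (q x) + dist (phiH T m (q x)) (q x) := by
    calc dist (phiH T m x) (phiH T m (q x))
        ≤ dist (phiH T m x) (q x) + dist (q x) (phiH T m (q x)) := dist_triangle _ _ _
      _ = dist (phiH T m x) (q x) + dist (phiH T m (q x)) (q x) := by rw [dist_comm (q x)]
  have := hfU.1
  have := hfU.2
  linarith

lemma exists_left_inv (hcomm : ∀ i j : Fin d, ∀ x : X, T i (T j x) = T j (T i x))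
    (hdist : IsDistalSystem T) {P : (Fin d → Bool) → Function.End X} (hP : P ∈ ellis T) :
    ∃ Q ∈ ellis T, Q * P = 1 := by
  set s : Set ((Fin d → Bool) → Function.End X) := (fun Q => Q * P) '' ellis T with hs
  have hsne : s.Nonempty := ⟨1 * P, 1, one_mem_ellis, rfl⟩
  have hscomp : IsCompact s := isCompact_ellis.image (continuous_mulRight P)
  have hsmul : ∀ x ∈ s, ∀ y ∈ s, x * y ∈ s := by
    rintro _ ⟨a, ha, rfl⟩ _ ⟨b, hb, rfl⟩
    refine ⟨a * P * b, ellis_mul_mem hcomm (ellis_mul_mem hcomm ha hP) hb, ?_⟩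
    show (a * P * b) * P = (a * P) * (b * P)
    rw [mul_assoc]
  obtain ⟨W, hWs, hWidem⟩ :=
    exists_idempotent_in_compact_subsemigroup continuous_mulRight s hsne hscomp hsmul
  obtain ⟨Q₀, hQ₀, hQ₀W⟩ := hWs
  have hWe : W ∈ ellis T := by
    rw [← hQ₀W]; exact ellis_mul_mem hcomm hQ₀ hP
  have hW1 : W = 1 := by
    funext ε
    have hidem : ∀ x : X, W ε (W ε x) = W ε x := by
      intro x
      have := congrFun hWidem ε
      exact congrFun this x
    have : ∀ x : X, W ε x = x := fun x => idem_fix hdist (ellis_proj hWe ε) hidem x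
    funext x
    exact this x
  exact ⟨Q₀, hQ₀, hQ₀W.trans hW1⟩

lemma exists_inv (hcomm : ∀ i j : Fin d, ∀ x : X, T i (T j x) = T j (T i x))
    (hdist : IsDistalSystem T) {P : (Fin d → Bool) → Function.End X} (hP : P ∈ ellis T) :
    ∃ Q ∈ ellis T, Q * P = 1 ∧ P * Q = 1 := by
  obtain ⟨Q, hQ, hQP⟩ := exists_left_inv hcomm hdist hP
  obtain ⟨R, _, hRQ⟩ := exists_left_inv hcomm hdist hQ
  have hPR : P = R := by
    calc P = 1 * P := (one_mul P).symm
      _ = (R * Q) * P := by rw [hRQ]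
      _ = R * (Q * P) := mul_assoc _ _ _
      _ = R * 1 := by rw [hQP]
      _ = R := mul_one R
  exact ⟨Q, hQ, hQP, by rw [hPR, hRQ]⟩

/-! ### Orbits -/

/-- The action of tuples of maps on points of the cube space. -/
def act (P : (Fin d → Bool) → Function.End X) (u : (Fin d → Bool) → X) :
    (Fin d → Bool) → X :=
  fun ε => P ε (u ε)

variable (T)

/-- The `ellis`-orbit of a point. -/
def orb (u : (Fin d → Bool) → X) : Set ((Fin d → Bool) → X) :=
  (fun P => act P u) '' ellis T

variable {T}

lemma act_mul (P Q : (Fin d → Bool) → Function.End X) (u : (Fin d → Bool) → X) :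
    act (P * Q) u = act P (act Q u) := rfl

lemma act_one (u : (Fin d → Bool) → X) : act 1 u = u := rfl

lemma continuous_act_at (u : (Fin d → Bool) → X) :
    Continuous fun P : (Fin d → Bool) → Function.End X => act P u :=
  continuous_pi fun ε => (continuous_end_apply (u ε)).comp (continuous_apply ε)

lemma orb_isClosed (u : (Fin d → Bool) → X) : IsClosed (orb T u) :=
  (isCompact_ellis.image (continuous_act_at u)).isClosed

lemma mem_orb_of_mem {u v : (Fin d → Bool) → X} (hcomm : ∀ i j : Fin d, ∀ x : X,
    T i (T j x) = T j (T i x)) {P : (Fin d → Bool) → Function.End X} (hP : P ∈ ellis T)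
    (hv : v ∈ orb T u) : act P v ∈ orb T u := by
  obtain ⟨Q, hQ, rfl⟩ := hv
  exact ⟨P * Q, ellis_mul_mem hcomm hP hQ, rfl⟩

/-- The generator in `cubes` form. -/
lemma act_gen_apply (m k : Fin d → ℤ) (u : (Fin d → Bool) → X) (ε : Fin d → Bool) :
    act (gen T m k) u ε = phiH T (fun i => m i + if ε i then k i else 0) (u ε) := rfl

lemma cube_gens_subset_orb (hcomm : ∀ i j : Fin d, ∀ x : X, T i (T j x) = T j (T i x))
    (hmin : IsMinimalSystem T) (a : X) :
    {y : (Fin d → Bool) → X | ∃ (x : X) (n : Fin d → ℤ), ∀ ε, y ε = cubeMap T n ε x} ⊆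
      orb T (fun _ => a) := by
  rintro y ⟨x, n, hy⟩
  -- first, the constant point at `x` lies in the orbit of the constant point at `a`
  have hconst : (fun _ : Fin d → Bool => x) ∈ orb T (fun _ => a) := by
    set S : Set X := {w : X | (fun _ : Fin d → Bool => w) ∈ orb T (fun _ => a)} with hS
    have hSclosed : IsClosed S := by
      have : Continuous fun w : X => (fun _ : Fin d → Bool => w) :=
        continuous_pi fun _ => continuous_id
      exact (orb_isClosed _).preimage this
    have hSorb : {y : X | ∃ g ∈ genGroup T, g a = y} ⊆ S := by
      rintro _ ⟨g, hg, rfl⟩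
      obtain ⟨m, rfl⟩ := exists_phiH_rep hcomm hg
      refine ⟨gen T m 0, subset_closure ⟨m, 0, rfl⟩, ?_⟩
      show act (gen T m 0) (fun _ => a) = fun _ : Fin d → Bool => phiH T m a
      funext ε
      rw [act_gen_apply]
      have he : (fun i => m i + if ε i then (0 : Fin d → ℤ) i else 0) = m := by
        funext i; by_cases h : ε i <;> simp [h]
      rw [he]
    have hx : x ∈ closure {y : X | ∃ g ∈ genGroup T, g a = y} := by
      rw [(hmin a).closure_eq]; trivial
    exact (closure_minimal hSorb hSclosed) hx
  obtain ⟨P₀, hP₀, hP₀x⟩ := hconst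
  have hP₀x' : act P₀ (fun _ => a) = fun _ : Fin d → Bool => x := hP₀x
  refine ⟨gen T 0 n * P₀, ellis_mul_mem hcomm (subset_closure ⟨0, n, rfl⟩) hP₀, ?_⟩
  show act (gen T 0 n * P₀) (fun _ => a) = y
  rw [act_mul, hP₀x']
  funext ε
  rw [act_gen_apply, hy ε, cubeMap_eq_phiH]
  have he : (fun i => (0 : Fin d → ℤ) i + if ε i then n i else 0)
      = fun i => if ε i then n i else 0 := by
    funext i; by_cases h : ε i <;> simp [h]
  rw [he]

lemma orb_subset_cubes (hcomm : ∀ i j : Fin d, ∀ x : X, T i (T j x) = T j (T i x)) (a : X) :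
    orb T (fun _ => a) ⊆ cubes T := by
  have hmt : MapsTo (fun P => act P (fun _ => a)) (gens T)
      {y : (Fin d → Bool) → X | ∃ (x : X) (n : Fin d → ℤ), ∀ ε, y ε = cubeMap T n ε x} := by
    rintro P ⟨m, k, rfl⟩
    refine ⟨phiH T m a, k, ?_⟩
    intro ε
    show act (gen T m k) (fun _ => a) ε = cubeMap T k ε (phiH T m a)
    rw [act_gen_apply, cubeMap_eq_phiH, phiH_mul_apply hcomm]
    have he : (fun i => m i + if ε i then k i else 0)
        = (fun i => if ε i then k i else 0) + m := by
      funext i; by_cases h : ε i <;> simp [h, add_comm]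
    rw [he]
  rintro v ⟨P, hP, rfl⟩
  exact (hmt.closure (continuous_act_at _)) hP

lemma cubes_eq_orb_const (hcomm : ∀ i j : Fin d, ∀ x : X, T i (T j x) = T j (T i x))
    (hmin : IsMinimalSystem T) (a : X) : cubes T = orb T (fun _ => a) := by
  refine le_antisymm ?_ (orb_subset_cubes hcomm a)
  exact closure_minimal (cube_gens_subset_orb hcomm hmin a) (orb_isClosed _)

/-- Minimality of the cube system: `cubes T` is the orbit closure of each of its points. -/
lemma cubes_eq_orb_self (hcomm : ∀ i j : Fin d, ∀ x : X, T i (T j x) = T j (T i x))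
    (hmin : IsMinimalSystem T) (hdist : IsDistalSystem T)
    {u : (Fin d → Bool) → X} (hu : u ∈ cubes T) : cubes T = orb T u := by
  set a : X := u (fun _ => false) with ha
  have hcu := cubes_eq_orb_const hcomm hmin a
  have hu' : u ∈ orb T (fun _ => a) := hcu ▸ hu
  obtain ⟨P, hP, hPu⟩ := hu'
  have hPu' : act P (fun _ : Fin d → Bool => a) = u := hPu
  obtain ⟨Q, hQ, hQP, _⟩ := exists_inv hcomm hdist hP
  have hconst : act Q u = fun _ => a := by
    rw [← hPu', ← act_mul, hQP, act_one]
  refine le_antisymm ?_ ?_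
  · rw [hcu]
    rintro v ⟨R, hR, rfl⟩
    refine ⟨R * Q, ellis_mul_mem hcomm hR hQ, ?_⟩
    show act (R * Q) u = act R (fun _ => a)
    rw [act_mul, hconst]
  · rintro v ⟨R, hR, rfl⟩
    rw [hcu]
    refine ⟨R * P, ellis_mul_mem hcomm hR hP, ?_⟩
    show act (R * P) (fun _ => a) = act R u
    rw [act_mul, hPu']

/-! ### Duplication along direction `j` -/

/-- Duplication of tuple-maps along direction `j`. -/
def dupP (j : Fin d) (P : (Fin d → Bool) → Function.End X) :
    (Fin d → Bool) → Function.End X :=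
  fun ε => P (Function.update ε j false)

lemma dupP_mem (j : Fin d) {P : (Fin d → Bool) → Function.End X} (hP : P ∈ ellis T) :
    dupP j P ∈ ellis T := by
  have hcont : Continuous fun P : (Fin d → Bool) → Function.End X => dupP j P :=
    continuous_pi fun ε => continuous_apply (Function.update ε j false)
  have hmt : MapsTo (dupP j) (gens T) (gens T) := by
    rintro P' ⟨m, k, rfl⟩
    refine ⟨m, Function.update k j 0, ?_⟩
    funext ε
    show gen T m k (Function.update ε j false) = gen T m (Function.update k j 0) ε
    unfold gen
    have he : (fun i => m i + if (Function.update ε j false) i then k i else 0)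
        = fun i => m i + if ε i then (Function.update k j 0) i else 0 := by
      funext i
      by_cases hij : i = j
      · subst hij; simp
      · simp [Function.update_of_ne hij]
    rw [he]
  exact (hmt.closure hcont) hP

/-- The key construction: from any `P ∈ ellis T` carrying the `j`-duplicated point `Du`
to `u`, build an element of `ellis T` which still carries `Du` to `u` but acts as the
identity map on all lower coordinates. -/
lemma exists_upper_map (hcomm : ∀ i j : Fin d, ∀ x : X, T i (T j x) = T j (T i x))
    (hdist : IsDistalSystem T) (j : Fin d) {u : (Fin d → Bool) → X}
    {P : (Fin d → Bool) → Function.End X} (hP : P ∈ ellis T)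
    (hPu : act P (fun ε => u (Function.update ε j false)) = u) :
    ∃ N ∈ ellis T, act N (fun ε => u (Function.update ε j false)) = u ∧
      ∀ ε : Fin d → Bool, ε j = false → ∀ w : X, N ε w = w := by
  set Du : (Fin d → Bool) → X := fun ε => u (Function.update ε j false) with hDu
  set sP : (Fin d → Bool) → Function.End X := dupP j P with hsP
  have hsPe : sP ∈ ellis T := dupP_mem j hP
  have hDuIdem : ∀ ε : Fin d → Bool, Du (Function.update ε j false) = Du ε := by
    intro ε
    show u (Function.update (Function.update ε j false) j false) = u (Function.update ε j false)
    rw [Function.update_idem]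
  have h1 : act sP Du = Du := by
    funext ε
    show P (Function.update ε j false) (Du ε) = Du ε
    have e2 : u (Function.update ε j false) = Du (Function.update ε j false) := by
      show _ = u (Function.update (Function.update ε j false) j false)
      rw [Function.update_idem]
    rw [← hDuIdem ε]
    exact (congrFun hPu (Function.update ε j false)).trans e2
  obtain ⟨sQ, hsQ, hsQP, hsPQ⟩ := exists_inv hcomm hdist hsPe
  have h2 : act sQ Du = Du := by
    conv_lhs => rw [← h1, ← act_mul, hsQP, act_one]
  refine ⟨P * sQ, ellis_mul_mem hcomm hP hsQ, ?_, ?_⟩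
  · rw [act_mul, h2, hPu]
  · intro ε hε w
    have hεup : Function.update ε j false = ε := by
      rw [← hε]; exact Function.update_eq_self j ε
    have hsPε : sP ε = P ε := by
      show P (Function.update ε j false) = P ε
      rw [hεup]
    have hinv : ∀ w : X, sP ε (sQ ε w) = w := by
      intro w
      have := congrFun hsPQ ε
      exact congrFun this w
    show P ε (sQ ε w) = w
    rw [← hsPε]
    exact hinv w

lemma dup_mem_cubes (hcomm : ∀ i j : Fin d, ∀ x : X, T i (T j x) = T j (T i x))
    (hmin : IsMinimalSystem T) (j : Fin d) {u : (Fin d → Bool) → X} (hu : u ∈ cubes T) :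
    (fun ε => u (Function.update ε j false)) ∈ cubes T := by
  set a : X := u (fun _ => false) with ha
  have hcu := cubes_eq_orb_const hcomm hmin a
  have hu' : u ∈ orb T (fun _ => a) := hcu ▸ hu
  obtain ⟨P, hP, hPu⟩ := hu'
  rw [hcu]
  refine ⟨dupP j P, dupP_mem j hP, ?_⟩
  funext ε
  show dupP j P ε a = u (Function.update ε j false)
  rw [← hPu]
  rfl

end Ellis

end GluingAux

open GluingAux in
/-- **Gluing Lemma** (Lemma `pegado1`).  Every minimal distal `ℤ^d`-system has the gluing
property. -/
theorem gluing_of_minimal_distal {X : Type*} [MetricSpace X] [CompactSpace X] {d : ℕ}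
    (T : Fin d → X ≃ₜ X)
    (hcomm : ∀ i j : Fin d, ∀ x : X, T i (T j x) = T j (T i x))
    (hmin : IsMinimalSystem T) (hdist : IsDistalSystem T) :
    GluingProp T := by
  intro j x hx y hy hmatch
  classical
  -- duplicated points
  set Dx : (Fin d → Bool) → X := fun ε => x (Function.update ε j false) with hDxdef
  set Dy : (Fin d → Bool) → X := fun ε => y (Function.update ε j false) with hDydef
  have hDx : Dx ∈ cubes T := dup_mem_cubes hcomm hmin j hx
  have hDy : Dy ∈ cubes T := dup_mem_cubes hcomm hmin j hy
  -- x lies in the orbit of Dx, y in the orbit of Dy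
  have hxorb : x ∈ orb T Dx := by
    rw [← cubes_eq_orb_self hcomm hmin hdist hDx]; exact hx
  have hyorb : y ∈ orb T Dy := by
    rw [← cubes_eq_orb_self hcomm hmin hdist hDy]; exact hy
  obtain ⟨P, hP, hPx⟩ := hxorb
  obtain ⟨Q, hQ, hQy⟩ := hyorb
  obtain ⟨Nx, hNx, hNxDx, hNxlow⟩ := exists_upper_map hcomm hdist j hP hPx
  obtain ⟨Ny, hNy, hNyDy, hNylow⟩ := exists_upper_map hcomm hdist j hQ hQy
  -- the glued point is `act (Ny * Nx) Dx`
  have hz : (fun ε : Fin d → Bool => if ε j then y ε else x ε) = act (Ny * Nx) Dx := by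
    funext ε
    show _ = Ny ε (Nx ε (Dx ε))
    by_cases hb : ε j
    · -- upper coordinate
      have hNxval : Nx ε (Dx ε) = x ε := congrFun hNxDx ε
      have hεup : Function.update ε j true = ε := by
        rw [← hb]; exact Function.update_eq_self j ε
      have hxy : x ε = Dy ε := by
        have := hmatch ε
        rw [hεup] at this
        exact this
      have hNyval : Ny ε (Dy ε) = y ε := congrFun hNyDy ε
      rw [hNxval, hxy, hNyval, if_pos hb]
    · -- lower coordinate
      have hbf : ε j = false := by simpa using hb
      have hεup : Function.update ε j false = ε := by
        rw [← hbf]; exact Function.update_eq_self j ε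
      rw [hNxlow ε hbf, hNylow ε hbf]
      show (if ε j then y ε else x ε) = Dx ε
      rw [if_neg hb]
      show x ε = x (Function.update ε j false)
      rw [hεup]
  rw [hz, cubes_eq_orb_self hcomm hmin hdist hDx]
  exact ⟨Ny * Nx, ellis_mul_mem hcomm hNy hNx, rfl⟩
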